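/- Let N ≥ 1 be an integer, let a < b be real numbers, and let f_1, …, f_N and g_1, …, g_N be continuous real-valued functions on [a,b]. Define the kernel K(x,y) = Σ_{j=1}^N f_j(x) g_j(y) and the N×N matrix A with entries A_{ij} = ∫_a^b f_i(x) g_j(x) dx. Then det(I_N − A) = Σ_{n=0}^{N} ((−1)^n / n!) · ∫_{[a,b]^n} det((K(x_i, x_j))_{1≤i,j≤n}) dx_1 ⋯ dx_n, where the n = 0 term of the sum is 1. -/

import Mathlib

open MeasureTheory

theorem det_one_add_sum_aux {ι : Type*} [Fintype ι] [DecidableEq ι] {R : Type*} [CommRing R]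
    (M : Matrix ι ι R) :
    (1 + M).det = ∑ s : Finset ι,
      (M.submatrix (Subtype.val : {x // x ∈ s} → ι) Subtype.val).det := by
  have h1 : (1 + M).det
      = Matrix.detRowAlternating ((fun i => M i) + fun i => (1 : Matrix ι ι R) i) := by
    congr 1
    ext i j
    simp [Matrix.add_apply, add_comm]
  have h2 := (Matrix.detRowAlternating (R := R) (n := ι)).toMultilinearMap.map_add_univ
      (fun i => M i) (fun i => (1 : Matrix ι ι R) i)
  rw [h1]
  rw [show Matrix.detRowAlternating ((fun i => M i) + fun i => (1 : Matrix ι ι R) i)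
      = ∑ s : Finset ι, Matrix.detRowAlternating
          (s.piecewise (fun i => M i) fun i => (1 : Matrix ι ι R) i) from h2]
  refine Finset.sum_congr rfl fun s _ => ?_
  have hdet : Matrix.detRowAlternating (s.piecewise (fun i => M i) fun i => (1 : Matrix ι ι R) i)
      = (Matrix.of (s.piecewise (fun i => M i) fun i => (1 : Matrix ι ι R) i)).det := rfl
  rw [hdet]
  set X := Matrix.of (s.piecewise (fun i => M i) fun i => (1 : Matrix ι ι R) i) with hX
  rw [← Matrix.det_submatrix_equiv_self (Equiv.sumCompl (· ∈ s)) X]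
  have hblock : X.submatrix (Equiv.sumCompl (· ∈ s)) (Equiv.sumCompl (· ∈ s))
      = Matrix.fromBlocks (M.submatrix Subtype.val Subtype.val)
          (M.submatrix Subtype.val Subtype.val) 0 1 := by
    ext i j
    rcases i with i | i <;> rcases j with j | j <;>
      simp only [Matrix.submatrix_apply, Equiv.sumCompl_apply_inl, Equiv.sumCompl_apply_inr,
        Matrix.fromBlocks_apply₁₁, Matrix.fromBlocks_apply₁₂, Matrix.fromBlocks_apply₂₁,
        Matrix.fromBlocks_apply₂₂, hX, Matrix.of_apply]
    · rw [Finset.piecewise_eq_of_mem _ _ _ i.2]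
    · rw [Finset.piecewise_eq_of_mem _ _ _ i.2]
    · rw [Finset.piecewise_eq_of_notMem _ _ _ i.2]
      exact Matrix.one_apply_ne (fun h => i.2 (h ▸ j.2))
    · rw [Finset.piecewise_eq_of_notMem _ _ _ i.2]
      simp [Matrix.one_apply, Subtype.val_inj]
  rw [hblock, Matrix.det_fromBlocks_zero₂₁, Matrix.det_one, mul_one]

lemma pi_restrict_eq_aux {n : ℕ} (s : Set ℝ) (hs : MeasurableSet s) :
    (volume : Measure (Fin n → ℝ)).restrict (Set.univ.pi fun _ => s)
      = Measure.pi (fun _ : Fin n => volume.restrict s) := by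
  refine (Measure.pi_eq (fun t ht => ?_)).symm
  rw [Measure.restrict_apply (MeasurableSet.univ_pi ht), ← Set.pi_inter_distrib,
    volume_pi]
  rw [Measure.pi_pi]
  exact Finset.prod_congr rfl fun i _ => (Measure.restrict_apply (ht i)).symm

lemma integral_pi_prod_aux {n : ℕ} {E : Type*} [MeasurableSpace E] (μ : Measure E)
    [SigmaFinite μ] (h : Fin n → E → ℝ) :
    ∫ x : Fin n → E, ∏ i, h i (x i) ∂(Measure.pi fun _ => μ) = ∏ i, ∫ t, h i t ∂μ := by
  letI : MeasureSpace E := { volume := μ }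
  haveI : SigmaFinite (volume : Measure E) := ‹_›
  exact MeasureTheory.integral_fin_nat_prod_eq_prod h

/-- Integrating the n×n kernel determinant over the box gives the sum over all colorings. -/
lemma step_int_aux {N : ℕ} (a b : ℝ) (f g : Fin N → ℝ → ℝ)
    (hf : ∀ i, ContinuousOn (f i) (Set.Icc a b))
    (hg : ∀ i, ContinuousOn (g i) (Set.Icc a b)) (n : ℕ) :
    (∫ x in (Set.univ.pi fun _ : Fin n => Set.Icc a b),
        Matrix.det (Matrix.of fun i j : Fin n => ∑ l, f l (x i) * g l (x j)))
      = ∑ c : Fin n → Fin N,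
          Matrix.det ((Matrix.of fun i j : Fin N =>
            ∫ t in Set.Icc a b, f i t * g j t).submatrix c c) := by
  classical
  -- integrability of each product term
  have hint : ∀ (σ : Equiv.Perm (Fin n)) (c : Fin n → Fin N),
      IntegrableOn (fun x : Fin n → ℝ => ∏ i, (f (c (σ⁻¹ i)) (x i) * g (c i) (x i)))
        (Set.univ.pi fun _ : Fin n => Set.Icc a b) := by
    intro σ c
    refine ContinuousOn.integrableOn_compact
      (isCompact_univ_pi fun _ => isCompact_Icc) ?_
    refine continuousOn_finset_prod _ fun i _ => ContinuousOn.mul ?_ ?_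
    · exact (hf _).comp (continuous_apply i).continuousOn (fun x hx => hx i (Set.mem_univ i))
    · exact (hg _).comp (continuous_apply i).continuousOn (fun x hx => hx i (Set.mem_univ i))
  -- pointwise expansion of the determinant
  have hpt : ∀ x : Fin n → ℝ,
      Matrix.det (Matrix.of fun i j : Fin n => ∑ l, f l (x i) * g l (x j))
        = ∑ σ : Equiv.Perm (Fin n), ∑ c : Fin n → Fin N,
            ((Equiv.Perm.sign σ : ℤ) : ℝ) * ∏ i, (f (c (σ⁻¹ i)) (x i) * g (c i) (x i)) := by
    intro x
    rw [Matrix.det_apply']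
    refine Finset.sum_congr rfl fun σ _ => ?_
    have h1 : (∏ i, (Matrix.of fun i j : Fin n => ∑ l, f l (x i) * g l (x j)) (σ i) i)
        = ∑ c : Fin n → Fin N, ∏ i, (f (c i) (x (σ i)) * g (c i) (x i)) := by
      simp only [Matrix.of_apply]
      rw [Finset.prod_univ_sum]
      simp
    rw [h1, Finset.mul_sum]
    refine Finset.sum_congr rfl fun c _ => ?_
    congr 1
    rw [Finset.prod_mul_distrib, Finset.prod_mul_distrib]
    congr 1
    have := Equiv.prod_comp σ (fun i => f (c (σ⁻¹ i)) (x i))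
    simp only [Equiv.Perm.inv_def, Equiv.symm_apply_apply] at this
    exact this
  simp only [hpt]
  rw [integral_finset_sum _ (fun σ _ => integrable_finset_sum _
    (fun c _ => ((hint σ c).const_mul _)))]
  have hterm : ∀ (σ : Equiv.Perm (Fin n)) (c : Fin n → Fin N),
      (∫ x in (Set.univ.pi fun _ : Fin n => Set.Icc a b),
          ∏ i, (f (c (σ⁻¹ i)) (x i) * g (c i) (x i)))
        = ∏ i, (Matrix.of fun i j : Fin N =>
            ∫ t in Set.Icc a b, f i t * g j t) (c (σ⁻¹ i)) (c i) := by
    intro σ c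
    rw [pi_restrict_eq_aux _ measurableSet_Icc,
      integral_pi_prod_aux (volume.restrict (Set.Icc a b))
        (fun i t => f (c (σ⁻¹ i)) t * g (c i) t)]
    rfl
  have hσ : ∀ σ : Equiv.Perm (Fin n),
      (∫ x in (Set.univ.pi fun _ : Fin n => Set.Icc a b),
          ∑ c : Fin n → Fin N,
            ((Equiv.Perm.sign σ : ℤ) : ℝ) * ∏ i, (f (c (σ⁻¹ i)) (x i) * g (c i) (x i)))
        = ∑ c : Fin n → Fin N, ((Equiv.Perm.sign σ : ℤ) : ℝ) *
            ∏ i, (Matrix.of fun i j : Fin N =>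
              ∫ t in Set.Icc a b, f i t * g j t) (c (σ⁻¹ i)) (c i) := by
    intro σ
    rw [integral_finset_sum _ (fun c _ => ((hint σ c).const_mul _))]
    refine Finset.sum_congr rfl fun c _ => ?_
    rw [integral_const_mul, hterm σ c]
  simp only [hσ]
  rw [Finset.sum_comm]
  refine Finset.sum_congr rfl fun c _ => ?_
  rw [Matrix.det_apply']
  refine Fintype.sum_equiv (Equiv.inv (Equiv.Perm (Fin n))) _ _ fun σ => ?_
  simp [Equiv.Perm.sign_inv, Matrix.submatrix_apply]

/-- Counting: the sum over all colorings equals `n!` times the sum over principal minors. -/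
lemma sum_subm_aux {N n : ℕ} (B : Matrix (Fin N) (Fin N) ℝ) :
    (∑ c : Fin n → Fin N, (B.submatrix c c).det)
      = ∑ s ∈ Finset.univ.filter (fun s : Finset (Fin N) => s.card = n),
          (n.factorial : ℝ) * (B.submatrix (Subtype.val : {x // x ∈ s} → _) Subtype.val).det := by
  classical
  -- non-injective colorings contribute zero
  rw [← Finset.sum_filter_add_sum_filter_not Finset.univ
    (fun c : Fin n → Fin N => Function.Injective c) (fun c => (B.submatrix c c).det)]
  have hzero : ∑ c ∈ Finset.univ.filter
      (fun c : Fin n → Fin N => ¬ Function.Injective c), (B.submatrix c c).det = 0 := by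
    refine Finset.sum_eq_zero fun c hc => ?_
    rw [Finset.mem_filter] at hc
    obtain ⟨i, j, hcij, hij⟩ := Function.not_injective_iff.1 hc.2
    refine Matrix.det_zero_of_row_eq hij ?_
    funext k
    simp [Matrix.submatrix_apply, hcij]
  rw [hzero, add_zero]
  -- group injective colorings by their image
  rw [← Finset.sum_fiberwise_of_maps_to (g := fun c : Fin n → Fin N => Finset.univ.image c)
    (t := Finset.univ.filter fun s : Finset (Fin N) => s.card = n)
    (fun c hc => by
      rw [Finset.mem_filter] at hc ⊢
      refine ⟨Finset.mem_univ _, ?_⟩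
      rw [Finset.card_image_of_injective _ hc.2, Finset.card_univ, Fintype.card_fin]) _]
  refine Finset.sum_congr rfl fun s hs => ?_
  rw [Finset.mem_filter] at hs
  obtain ⟨-, hs2⟩ := hs
  rw [Finset.filter_filter]
  -- every coloring in the fiber has the same determinant
  have hfiber_det : ∀ c : Fin n → Fin N, Function.Injective c → Finset.univ.image c = s →
      (B.submatrix c c).det
        = (B.submatrix (Subtype.val : {x // x ∈ s} → _) Subtype.val).det := by
    intro c hc hcs
    have hmem : ∀ i, c i ∈ s := fun i => hcs ▸ Finset.mem_image_of_mem c (Finset.mem_univ i)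
    set φ : Fin n → {x // x ∈ s} := fun i => ⟨c i, hmem i⟩ with hφ
    have hφbij : Function.Bijective φ := by
      refine (Fintype.bijective_iff_injective_and_card φ).2
        ⟨fun i j h => hc (congrArg Subtype.val h), ?_⟩
      rw [Fintype.card_fin, Fintype.card_coe, hs2]
    have hsub : B.submatrix c c
        = (B.submatrix (Subtype.val : {x // x ∈ s} → _) Subtype.val).submatrix
            (Equiv.ofBijective φ hφbij) (Equiv.ofBijective φ hφbij) := rfl
    rw [hsub, Matrix.det_submatrix_equiv_self]
  have hconst : ∑ c ∈ Finset.univ.filter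
      (fun c : Fin n → Fin N => Function.Injective c ∧ Finset.univ.image c = s),
        (B.submatrix c c).det
      = (Finset.univ.filter
          (fun c : Fin n → Fin N => Function.Injective c ∧ Finset.univ.image c = s)).card
        • (B.submatrix (Subtype.val : {x // x ∈ s} → _) Subtype.val).det := by
    rw [← Finset.sum_const]
    refine Finset.sum_congr rfl fun c hc => ?_
    rw [Finset.mem_filter] at hc
    exact hfiber_det c hc.2.1 hc.2.2
  rw [hconst, nsmul_eq_mul]
  congr 1
  -- the fiber has n! elements
  have hcardeq : (Finset.univ.filter
      (fun c : Fin n → Fin N => Function.Injective c ∧ Finset.univ.image c = s)).card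
      = n.factorial := by
    rw [← Fintype.card_subtype]
    have E : {c : Fin n → Fin N // Function.Injective c ∧ Finset.univ.image c = s}
        ≃ (Fin n ↪ {x // x ∈ s}) :=
      { toFun := fun c => ⟨fun i => ⟨c.1 i,
          (Finset.le_iff_subset.1 c.2.2.le) (Finset.mem_image_of_mem c.1 (Finset.mem_univ i))⟩,
          fun i j h => c.2.1 (congrArg Subtype.val h)⟩
        invFun := fun E => ⟨fun i => (E i).1,
          fun i j h => E.injective (Subtype.val_injective h),
          by
            refine Finset.eq_of_subset_of_card_le ?_ ?_
            · intro x hx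
              obtain ⟨i, -, rfl⟩ := Finset.mem_image.1 hx
              exact (E i).2
            · rw [Finset.card_image_of_injective _
                (fun i j h => E.injective (Subtype.val_injective h)),
                Finset.card_univ, Fintype.card_fin, hs2]⟩
        left_inv := fun c => rfl
        right_inv := fun E => rfl }
    rw [Fintype.card_congr E, Fintype.card_embedding_eq, Fintype.card_coe,
      Fintype.card_fin, hs2, Nat.descFactorial_self]
  rw [hcardeq]

theorem stmt_1 (N : ℕ) (hN : 1 ≤ N) (a b : ℝ) (hab : a < b)
    (f g : Fin N → ℝ → ℝ)
    (hf : ∀ i, ContinuousOn (f i) (Set.Icc a b))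
    (hg : ∀ i, ContinuousOn (g i) (Set.Icc a b)) :
    Matrix.det (1 - Matrix.of fun i j : Fin N => ∫ t in Set.Icc a b, f i t * g j t)
      = ∑ n ∈ Finset.range (N + 1), ((-1 : ℝ) ^ n / n.factorial) *
          ∫ x in (Set.univ.pi fun _ : Fin n => Set.Icc a b),
            Matrix.det (Matrix.of fun i j : Fin n => ∑ l, f l (x i) * g l (x j)) := by
  classical
  set B : Matrix (Fin N) (Fin N) ℝ :=
    Matrix.of fun i j : Fin N => ∫ t in Set.Icc a b, f i t * g j t with hB
  -- right-hand side computation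
  have hrhs : ∀ n ∈ Finset.range (N + 1),
      ((-1 : ℝ) ^ n / n.factorial) *
          (∫ x in (Set.univ.pi fun _ : Fin n => Set.Icc a b),
            Matrix.det (Matrix.of fun i j : Fin n => ∑ l, f l (x i) * g l (x j)))
        = ∑ s ∈ Finset.univ.filter (fun s : Finset (Fin N) => s.card = n),
            (-1 : ℝ) ^ s.card *
              (B.submatrix (Subtype.val : {x // x ∈ s} → _) Subtype.val).det := by
    intro n _
    rw [step_int_aux a b f g hf hg n, sum_subm_aux B, Finset.mul_sum]
    refine Finset.sum_congr rfl fun s hs => ?_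
    rw [Finset.mem_filter] at hs
    rw [hs.2, ← mul_assoc, div_mul_cancel₀ _
      (show (n.factorial : ℝ) ≠ 0 by exact_mod_cast n.factorial_ne_zero)]
  rw [Finset.sum_congr rfl hrhs]
  -- left-hand side computation
  have hlhs : (1 - B).det = ∑ s : Finset (Fin N),
      (-1 : ℝ) ^ s.card *
        (B.submatrix (Subtype.val : {x // x ∈ s} → _) Subtype.val).det := by
    rw [sub_eq_add_neg, det_one_add_sum_aux]
    refine Finset.sum_congr rfl fun s _ => ?_
    have h3 : (-B).submatrix (Subtype.val : {x // x ∈ s} → Fin N)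
          (Subtype.val : {x // x ∈ s} → Fin N)
        = -(B.submatrix (Subtype.val : {x // x ∈ s} → Fin N)
          (Subtype.val : {x // x ∈ s} → Fin N)) := rfl
    rw [h3, Matrix.det_neg, Fintype.card_coe]
  rw [hlhs]
  -- regroup the sum over all subsets by cardinality
  rw [← Finset.sum_fiberwise_of_maps_to (g := fun s : Finset (Fin N) => s.card)
    (t := Finset.range (N + 1)) (fun s _ => by
      simp only [Finset.mem_range, Nat.lt_succ_iff]
      simpa using s.card_le_univ) _]
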